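/- In the random-sum setup, assume additionally that P(i ∈ {Y_1, …, Y_N}) > 0 for every i ∈ E (that is, with positive probability some index n with 1 ≤ n ≤ N has Y_n = i). Then there exist κ ≥ 0 and q > 0 such that for all z ≥ 0, P(Z ≤ −z) ≥ q · max_{i∈E} Π_i((−∞, −z − κ]). -/

import Mathlib

open scoped ENNReal


open MeasureTheory Set

/-- The random-sum setup: a family `X i n` of independent real random variables with
`X i n ∼ law i`, an `E`-valued sequence `Y` and an `ℕ`-valued variable `N` such that
the pair `((Y n)ₙ, N)` is independent of the whole family `(X i n)`. -/
structure RandomSumSetup (E : Type*) [MeasurableSpace E] (Ω : Type*) [MeasurableSpace Ω]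
    (P : Measure Ω) (law : E → Measure ℝ) where
  X : E → ℕ → Ω → ℝ
  Y : ℕ → Ω → E
  N : Ω → ℕ
  measX : ∀ i n, Measurable (X i n)
  measY : ∀ n, Measurable (Y n)
  measN : Measurable N
  distX : ∀ i n, P.map (X i n) = law i
  indepX : ProbabilityTheory.iIndepFun
    (fun (p : E × ℕ) ω => X p.1 p.2 ω) P
  indepYN : ProbabilityTheory.IndepFun (fun ω => ((fun n => Y n ω), N ω))
    (fun ω (p : E × ℕ) => X p.1 p.2 ω) P

/-- The random sum `Z = Σ_{n=1}^{N} X^{Y_n, n}` (empty sum `= 0`). -/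
noncomputable def RandomSumSetup.Z {E : Type*} [MeasurableSpace E] {Ω : Type*}
    [MeasurableSpace Ω] {P : Measure Ω} {law : E → Measure ℝ}
    (S : RandomSumSetup E Ω P law) : Ω → ℝ :=
  fun ω => ∑ n ∈ Finset.Icc 1 (S.N ω), S.X (S.Y n ω) n ω


private theorem randomSum_aux {E : Type*} [Fintype E] [Nonempty E] [MeasurableSpace E]
    [MeasurableSingletonClass E] {Ω : Type*} [MeasurableSpace Ω] (P : Measure Ω)
    [IsProbabilityMeasure P] (law : E → Measure ℝ)
    (hlaw : ∀ i, IsProbabilityMeasure (law i))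
    (X : E → ℕ → Ω → ℝ) (Y : ℕ → Ω → E) (N : Ω → ℕ)
    (measX : ∀ i n, Measurable (X i n)) (measY : ∀ n, Measurable (Y n))
    (measN : Measurable N)
    (distX : ∀ i n, P.map (X i n) = law i)
    (indepX : ProbabilityTheory.iIndepFun
      (fun (p : E × ℕ) ω => X p.1 p.2 ω) P)
    (indepYN : ProbabilityTheory.IndepFun (fun ω => ((fun n => Y n ω), N ω))
      (fun ω (p : E × ℕ) => X p.1 p.2 ω) P)
    (hvisit : ∀ i : E, 0 < P {ω | ∃ n, 1 ≤ n ∧ n ≤ N ω ∧ Y n ω = i}) :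
    ∃ κ : ℝ, 0 ≤ κ ∧ ∃ q : ℝ, 0 < q ∧ ∀ z : ℝ, 0 ≤ z →
      ENNReal.ofReal q * ⨆ i, law i (Iic (-z - κ)) ≤
        P {ω | (∑ n ∈ Finset.Icc 1 (N ω), X (Y n ω) n ω) ≤ -z} := by
  classical
  -- step 1 : choose c
  obtain ⟨c, hc0, hc⟩ : ∃ c : ℝ, 0 ≤ c ∧ ∀ j, (1/2 : ℝ≥0∞) ≤ law j (Iic c) := by
    have h : ∀ᶠ c : ℝ in Filter.atTop, ∀ j, (1/2 : ℝ≥0∞) ≤ law j (Iic c) := by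
      rw [Filter.eventually_all]
      intro j
      have := tendsto_measure_Iic_atTop (law j)
      rw [measure_univ] at this
      exact this.eventually_const_le (by norm_num)
    obtain ⟨c, hc1, hc2⟩ := (h.and (Filter.eventually_ge_atTop (0:ℝ))).exists
    exact ⟨c, hc2, hc1⟩
  set A : E → Set Ω := fun i => {ω | ∃ n, 1 ≤ n ∧ n ≤ N ω ∧ Y n ω = i} with hAdef
  -- step 2 : choose M
  have hM : ∀ i : E, ∃ m : ℕ, 0 < P (A i ∩ {ω | N ω ≤ m}) := by
    intro i
    by_contra h
    push_neg at h
    simp only [le_zero_iff] at h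
    have hsub : A i ⊆ ⋃ m : ℕ, (A i ∩ {ω | N ω ≤ m}) := by
      intro ω hω; exact mem_iUnion.2 ⟨N ω, hω, by simp⟩
    have := (measure_mono hsub).trans_eq (measure_iUnion_null h)
    exact absurd (le_antisymm this zero_le') (hvisit i).ne'
  choose Mi hMi using hM
  set M : ℕ := Finset.univ.sup Mi with hMdef
  have hMi' : ∀ i, 0 < P (A i ∩ {ω | N ω ≤ M}) := fun i =>
    lt_of_lt_of_le (hMi i) (measure_mono (inter_subset_inter_right _
      (fun ω h => (le_trans (h : N ω ≤ Mi i) (Finset.le_sup (Finset.mem_univ i)) : N ω ≤ M))))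
  -- step 3 : δ and q
  set δ : ℝ≥0∞ := Finset.univ.inf' Finset.univ_nonempty
    (fun i => P (A i ∩ {ω | N ω ≤ M})) with hδdef
  have hδpos : 0 < δ := by
    rw [hδdef, Finset.lt_inf'_iff]
    exact fun i _ => hMi' i
  have hδtop : δ ≠ ∞ :=
    ne_top_of_le_ne_top (measure_ne_top P (A (Classical.arbitrary E) ∩ {ω | N ω ≤ M}))
      (Finset.inf'_le _ (Finset.mem_univ _))
  set qE : ℝ≥0∞ := δ * (1/2)^M with hqEdef
  have hqEtop : qE ≠ ∞ := ENNReal.mul_ne_top hδtop (by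
    apply ENNReal.pow_ne_top; simp)
  have hqEpos : 0 < qE := by
    exact ENNReal.mul_pos hδpos.ne' (pow_ne_zero M (by norm_num))
  set κ : ℝ := (M : ℝ) * c with hκdef
  refine ⟨κ, by positivity, qE.toReal, ENNReal.toReal_pos hqEpos.ne' hqEtop, ?_⟩
  intro z hz
  rw [ENNReal.ofReal_toReal hqEtop]
  -- pick maximizing i0
  obtain ⟨i0, hi0⟩ := Finite.exists_max (fun i => law i (Iic (-z - κ)))
  have hsup : ⨆ i, law i (Iic (-z - κ)) ≤ law i0 (Iic (-z - κ)) := iSup_le hi0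
  set L : ℝ≥0∞ := law i0 (Iic (-z - κ)) with hLdef
  refine le_trans (mul_le_mul_right hsup _) ?_
  -- the combinatorial setup
  set ext : (Fin (M+1) → E) → ℕ → E :=
    fun g n => if h : n < M+1 then g ⟨n, h⟩ else g 0 with hextdef
  have hext_lt : ∀ (g : Fin (M+1) → E) (n : ℕ) (h : n < M+1), ext g n = g ⟨n, h⟩ :=
    fun g n h => dif_pos h
  set T : Finset ((Fin (M+1) → E) × ℕ) :=
    (Finset.univ ×ˢ Finset.Icc 1 M).filter
      (fun t => ∃ n, 1 ≤ n ∧ n ≤ t.2 ∧ ext t.1 n = i0) with hTdef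
  set n0 : ((Fin (M+1) → E) × ℕ) → ℕ := fun t =>
    if h : ∃ n, 1 ≤ n ∧ n ≤ t.2 ∧ ext t.1 n = i0 then Nat.find h else 1 with hn0def
  set B : ((Fin (M+1) → E) × ℕ) → Set Ω :=
    fun t => {ω | (∀ k, k ≤ M → Y k ω = ext t.1 k) ∧ N ω = t.2} with hBdef
  set a : ((Fin (M+1) → E) × ℕ) → ℕ → ℝ :=
    fun t n => if n = n0 t then -z - κ else c with hadef
  set C : ((Fin (M+1) → E) × ℕ) → Set Ω :=
    fun t => ⋂ n ∈ Finset.Icc 1 t.2, {ω | X (ext t.1 n) n ω ≤ a t n} with hCdef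
  -- facts about members of T
  have hT : ∀ t ∈ T, 1 ≤ t.2 ∧ t.2 ≤ M ∧ 1 ≤ n0 t ∧ n0 t ≤ t.2 ∧ ext t.1 (n0 t) = i0 := by
    intro t ht
    rw [hTdef, Finset.mem_filter, Finset.mem_product, Finset.mem_Icc] at ht
    obtain ⟨⟨_, h1, h2⟩, hex⟩ := ht
    have hn0 : n0 t = Nat.find hex := dif_pos hex
    have hspec := Nat.find_spec hex
    rw [← hn0] at hspec
    exact ⟨h1, h2, hspec.1, hspec.2.1, hspec.2.2⟩
  -- measurability
  have hBmeas : ∀ t, MeasurableSet (B t) := by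
    intro t
    have : B t = (⋂ k ∈ Finset.range (M+1), Y k ⁻¹' {ext t.1 k}) ∩ N ⁻¹' {t.2} := by
      ext ω
      simp only [hBdef, mem_setOf_eq, mem_inter_iff, mem_iInter, mem_preimage,
        mem_singleton_iff, Finset.mem_range, Nat.lt_succ_iff]
    rw [this]
    exact (MeasurableSet.biInter (Finset.range (M+1)).countable_toSet
      (fun k _ => (measY k) (measurableSet_singleton _))).inter
      (measN (measurableSet_singleton _))
  have hCmeas : ∀ t, MeasurableSet (C t) := by
    intro t
    exact MeasurableSet.biInter (Finset.Icc 1 t.2).countable_toSet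
      (fun n _ => measurableSet_le (measX _ n) measurable_const)
  -- disjointness of B
  have hBdisj : (T : Set ((Fin (M+1) → E) × ℕ)).PairwiseDisjoint (fun t => B t ∩ C t) := by
    intro t ht t' ht' hne
    refine Set.disjoint_left.2 fun ω hω hω' => hne ?_
    obtain ⟨⟨hY1, hN1⟩, _⟩ := hω
    obtain ⟨⟨hY2, hN2⟩, _⟩ := hω'
    have h2 : t.2 = t'.2 := hN1 ▸ hN2 ▸ rfl
    have h1 : t.1 = t'.1 := by
      funext k
      have hk : (k : ℕ) < M + 1 := k.isLt
      have e1 := hY1 k (Nat.lt_succ_iff.mp hk)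
      have e2 := hY2 k (Nat.lt_succ_iff.mp hk)
      rw [hext_lt t.1 k hk] at e1
      rw [hext_lt t'.1 k hk] at e2
      simpa using e1 ▸ e2
    exact Prod.ext h1 h2
  -- covering
  have hcover : A i0 ∩ {ω | N ω ≤ M} ⊆ ⋃ t ∈ T, B t := by
    rintro ω ⟨⟨n, hn1, hn2, hY⟩, hNM⟩
    refine mem_iUnion₂.2 ⟨((fun k : Fin (M+1) => Y k ω), N ω), ?_, ?_, rfl⟩
    · rw [hTdef, Finset.mem_filter, Finset.mem_product, Finset.mem_Icc]
      refine ⟨⟨Finset.mem_univ _, hn1.trans hn2, hNM⟩, n, hn1, hn2, ?_⟩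
      rw [hext_lt _ n (Nat.lt_succ_of_le (hn2.trans hNM))]
      exact hY
    · intro k hk
      rw [hext_lt _ k (Nat.lt_succ_of_le hk)]
  -- inclusion B t ∩ C t ⊆ {Z ≤ -z}
  have hincl : ∀ t ∈ T, B t ∩ C t ⊆ {ω | (∑ n ∈ Finset.Icc 1 (N ω), X (Y n ω) n ω) ≤ -z} := by
    intro t ht
    obtain ⟨h1t, h2t, hn01, hn02, hn0i⟩ := hT t ht
    have hmem : n0 t ∈ Finset.Icc 1 t.2 := Finset.mem_Icc.mpr ⟨hn01, hn02⟩
    rintro ω ⟨⟨hYω, hNω⟩, hCω⟩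
    simp only [mem_setOf_eq]
    rw [hNω]
    have hsum1 : ∑ n ∈ Finset.Icc 1 t.2, X (Y n ω) n ω
        = ∑ n ∈ Finset.Icc 1 t.2, X (ext t.1 n) n ω := by
      refine Finset.sum_congr rfl fun n hn => ?_
      rw [hYω n (le_trans (Finset.mem_Icc.mp hn).2 h2t)]
    rw [hsum1]
    have hle : ∀ n ∈ Finset.Icc 1 t.2, X (ext t.1 n) n ω ≤ a t n := by
      intro n hn
      exact Set.mem_iInter₂.mp hCω n hn
    have hcard : ((Finset.Icc 1 t.2).erase (n0 t)).card = t.2 - 1 := by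
      rw [Finset.card_erase_of_mem hmem, Nat.card_Icc]
      omega
    calc ∑ n ∈ Finset.Icc 1 t.2, X (ext t.1 n) n ω ≤ ∑ n ∈ Finset.Icc 1 t.2, a t n :=
          Finset.sum_le_sum hle
      _ = a t (n0 t) + ∑ n ∈ (Finset.Icc 1 t.2).erase (n0 t), a t n :=
          (Finset.add_sum_erase _ _ hmem).symm
      _ = (-z - κ) + ∑ n ∈ (Finset.Icc 1 t.2).erase (n0 t), c := by
          rw [show a t (n0 t) = -z - κ from if_pos rfl]
          congr 1
          exact Finset.sum_congr rfl fun n hn => if_neg (Finset.ne_of_mem_erase hn)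
      _ = (-z - κ) + ((t.2 - 1 : ℕ) : ℝ) * c := by
          rw [Finset.sum_const, hcard, nsmul_eq_mul]
      _ ≤ -z := by
          have h3 : ((t.2 - 1 : ℕ) : ℝ) * c ≤ (M : ℝ) * c :=
            mul_le_mul_of_nonneg_right
              (Nat.cast_le.mpr (le_trans (Nat.sub_le _ _) h2t)) hc0
          rw [hκdef] at *
          linarith
  -- independence : P (B t ∩ C t) = P (B t) * P (C t)
  have hindep : ∀ t ∈ T, P (B t ∩ C t) = P (B t) * P (C t) := by
    intro t ht
    set s1 : Set ((ℕ → E) × ℕ) :=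
      {f : ℕ → E | ∀ k ∈ Finset.range (M+1), f k = ext t.1 k} ×ˢ ({t.2} : Set ℕ) with hs1def
    set s2 : Set ((E × ℕ) → ℝ) :=
      ⋂ n ∈ Finset.Icc 1 t.2, {g : (E × ℕ) → ℝ | g (ext t.1 n, n) ≤ a t n} with hs2def
    have hs1 : MeasurableSet s1 := by
      refine MeasurableSet.prod ?_ (measurableSet_singleton _)
      have heq : {f : ℕ → E | ∀ k ∈ Finset.range (M+1), f k = ext t.1 k} =
          ⋂ k ∈ Finset.range (M+1), (fun f : ℕ → E => f k) ⁻¹' {ext t.1 k} := by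
        ext f; simp
      rw [heq]
      exact MeasurableSet.biInter (Finset.range (M+1)).countable_toSet fun k _ =>
        (measurable_pi_apply k) (measurableSet_singleton _)
    have hs2 : MeasurableSet s2 :=
      MeasurableSet.biInter (Finset.Icc 1 t.2).countable_toSet fun n _ =>
        measurableSet_le (measurable_pi_apply _) measurable_const
    have hB : B t = (fun ω => ((fun n => Y n ω), N ω)) ⁻¹' s1 := by
      ext ω
      simp only [hBdef, hs1def, mem_setOf_eq, mem_preimage, mem_prod, mem_singleton_iff,
        Finset.mem_range, Nat.lt_succ_iff]
    have hC : C t = (fun ω (p : E × ℕ) => X p.1 p.2 ω) ⁻¹' s2 := by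
      ext ω
      simp only [hCdef, hs2def, mem_iInter, mem_setOf_eq, mem_preimage]
    rw [hB, hC]
    exact indepYN.measure_inter_preimage_eq_mul s1 s2 hs1 hs2
  -- product formula for C
  have hCval : ∀ t ∈ T, P (C t) = ∏ n ∈ Finset.Icc 1 t.2, law (ext t.1 n) (Iic (a t n)) := by
    intro t ht
    set e : ℕ → E × ℕ := fun n => (ext t.1 n, n) with hedef
    set D : E × ℕ → Set Ω := fun p => X p.1 p.2 ⁻¹' Iic (a t p.2) with hDdef
    have hCt : C t = ⋂ p ∈ (Finset.Icc 1 t.2).image e, D p := by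
      ext ω
      simp only [hCdef, hDdef, mem_iInter, Finset.mem_image, mem_setOf_eq, mem_preimage,
        mem_Iic, forall_exists_index, and_imp]
      constructor
      · rintro h p n hn rfl
        exact h n hn
      · intro h n hn
        exact h (e n) n hn rfl
    have hprod := indepX.meas_biInter (S := (Finset.Icc 1 t.2).image e) (s := D)
      (fun p _ => ⟨Iic (a t p.2), measurableSet_Iic, rfl⟩)
    rw [hCt, hprod, Finset.prod_image (fun x _ y _ h => congrArg Prod.snd h)]
    refine Finset.prod_congr rfl fun n hn => ?_
    show P (X (ext t.1 n) n ⁻¹' Iic (a t n)) = _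
    rw [← distX (ext t.1 n) n, Measure.map_apply (measX _ _) measurableSet_Iic]
  -- lower bound for P (C t)
  have hClow : ∀ t ∈ T, (1/2 : ℝ≥0∞)^M * L ≤ P (C t) := by
    intro t ht
    obtain ⟨h1t, h2t, hn01, hn02, hn0i⟩ := hT t ht
    have hmem : n0 t ∈ Finset.Icc 1 t.2 := Finset.mem_Icc.mpr ⟨hn01, hn02⟩
    rw [hCval t ht, ← Finset.mul_prod_erase _ _ hmem]
    have h1 : law (ext t.1 (n0 t)) (Iic (a t (n0 t))) = L := by
      rw [hn0i, show a t (n0 t) = -z - κ from if_pos rfl]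
    have h2 : (1/2:ℝ≥0∞)^M ≤
        ∏ n ∈ (Finset.Icc 1 t.2).erase (n0 t), law (ext t.1 n) (Iic (a t n)) := by
      calc (1/2:ℝ≥0∞)^M ≤ (1/2:ℝ≥0∞)^((Finset.Icc 1 t.2).erase (n0 t)).card := by
            apply pow_le_pow_of_le_one zero_le' (by norm_num)
            rw [Finset.card_erase_of_mem hmem, Nat.card_Icc]
            omega
        _ = ∏ _n ∈ (Finset.Icc 1 t.2).erase (n0 t), (1/2:ℝ≥0∞) :=
            (Finset.prod_const _).symm
        _ ≤ _ := by
            refine Finset.prod_le_prod' fun n hn => ?_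
            rw [show a t n = c from if_neg (Finset.ne_of_mem_erase hn)]
            exact hc _
    rw [h1, mul_comm]
    exact mul_le_mul_right h2 _
  -- conclusion
  calc qE * L = δ * ((1/2:ℝ≥0∞)^M * L) := by rw [hqEdef]; ring
    _ ≤ P (A i0 ∩ {ω | N ω ≤ M}) * ((1/2:ℝ≥0∞)^M * L) := by
        refine mul_le_mul_left ?_ _
        exact Finset.inf'_le _ (Finset.mem_univ i0)
    _ ≤ P (⋃ t ∈ T, B t) * ((1/2:ℝ≥0∞)^M * L) :=
        mul_le_mul_left (measure_mono hcover) _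
    _ ≤ (∑ t ∈ T, P (B t)) * ((1/2:ℝ≥0∞)^M * L) :=
        mul_le_mul_left (measure_biUnion_finset_le _ _) _
    _ = ∑ t ∈ T, P (B t) * ((1/2:ℝ≥0∞)^M * L) := Finset.sum_mul _ _ _
    _ ≤ ∑ t ∈ T, P (B t ∩ C t) := by
        refine Finset.sum_le_sum fun t ht => ?_
        rw [hindep t ht]
        exact mul_le_mul_right (hClow t ht) _
    _ = P (⋃ t ∈ T, (B t ∩ C t)) :=
        (measure_biUnion_finset hBdisj fun t _ => (hBmeas t).inter (hCmeas t)).symm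
    _ ≤ P {ω | (∑ n ∈ Finset.Icc 1 (N ω), X (Y n ω) n ω) ≤ -z} := by
        refine measure_mono ?_
        exact iUnion₂_subset hincl

/-- In the random-sum setup, if each state `i ∈ E` is visited with positive probability
among `Y_1, …, Y_N`, then there exist `κ ≥ 0` and `q > 0` such that for all `z ≥ 0`,
`P(Z ≤ −z) ≥ q · max_i Π_i((−∞, −z − κ])`. -/
theorem randomSum_lower_tail_bound {E : Type*} [Fintype E] [Nonempty E] [MeasurableSpace E]
    [MeasurableSingletonClass E] {Ω : Type*} [MeasurableSpace Ω] (P : Measure Ω)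
    [IsProbabilityMeasure P] (law : E → Measure ℝ)
    (hlaw : ∀ i, IsProbabilityMeasure (law i)) (S : RandomSumSetup E Ω P law)
    (hvisit : ∀ i : E, 0 < P {ω | ∃ n, 1 ≤ n ∧ n ≤ S.N ω ∧ S.Y n ω = i}) :
    ∃ κ : ℝ, 0 ≤ κ ∧ ∃ q : ℝ, 0 < q ∧ ∀ z : ℝ, 0 ≤ z →
      ENNReal.ofReal q * ⨆ i, law i (Iic (-z - κ)) ≤ P {ω | S.Z ω ≤ -z} := by
  have key := randomSum_aux P law hlaw S.X S.Y S.N S.measX S.measY S.measN S.distX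
    S.indepX S.indepYN hvisit
  simpa only [RandomSumSetup.Z] using key
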